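/- (Lemma: posterior variance is bounded below by the noise variance.) For every location y ∈ D and every vector A of locations of D all distinct from y (with pairwise distinct entries), the posterior variance satisfies Σ_{yy|A} := Σ_{yy} − Σ_{yA}Σ_{AA}⁻¹Σ_{Ay} ≥ σ_n². -/

import Mathlib

open Finset

/-- Covariance matrix of the GP: kernel plus sensor noise on the diagonal. -/
noncomputable def SigmaMat {D : Type*} [DecidableEq D] (K : D → D → ℝ) (σn2 : ℝ) :
    Matrix D D ℝ :=
  Matrix.of fun x y => K x y + if x = y then σn2 else 0

/-- Submatrix of covariances between the entries of two finsets of locations. -/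
noncomputable def subMat {D : Type*} (Cov : Matrix D D ℝ) (a s : Finset D) :
    Matrix ↥a ↥s ℝ :=
  Matrix.of fun p q => Cov p.1 q.1

/-- Posterior covariance `Σ_{aa|s} = Σ_{aa} - Σ_{as} Σ_{ss}⁻¹ Σ_{sa}`. -/
noncomputable def postCov {D : Type*} [DecidableEq D] (Cov : Matrix D D ℝ) (a s : Finset D) :
    Matrix ↥a ↥a ℝ :=
  subMat Cov a a - subMat Cov a s * (subMat Cov s s)⁻¹ * subMat Cov s a

/-- Gaussian conditional entropy `H(Z_a | Z_s) = (1/2) log((2πe)^{|a|} det Σ_{aa|s})`. -/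
noncomputable def condEnt {D : Type*} [DecidableEq D] (Cov : Matrix D D ℝ) (a s : Finset D) : ℝ :=
  (1/2) * Real.log ((2 * Real.pi * Real.exp 1) ^ a.card * (postCov Cov a s).det)

/-- Gaussian joint entropy `H(Z_a)`. -/
noncomputable def ent {D : Type*} [DecidableEq D] (Cov : Matrix D D ℝ) (a : Finset D) : ℝ :=
  condEnt Cov a ∅

/-- Mutual information `I(Z_a ; Z_b) = H(Z_a) - H(Z_a | Z_b)`. -/
noncomputable def mutInf {D : Type*} [DecidableEq D] (Cov : Matrix D D ℝ) (a b : Finset D) : ℝ :=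
  ent Cov a - condEnt Cov a b

/-- Conditional mutual information `I(Z_a ; Z_b | Z_s) = H(Z_a | Z_s) - H(Z_a | Z_s, Z_b)`. -/
noncomputable def condMutInf {D : Type*} [DecidableEq D] (Cov : Matrix D D ℝ)
    (a b s : Finset D) : ℝ :=
  condEnt Cov a s - condEnt Cov a (s ∪ b)

/-- Posterior variance `Σ_{yy|A}` of a single location `y`. -/
noncomputable def postVar {D : Type*} [DecidableEq D] (Cov : Matrix D D ℝ) (y : D)
    (A : Finset D) : ℝ :=
  postCov Cov {y} A ⟨y, Finset.mem_singleton_self y⟩ ⟨y, Finset.mem_singleton_self y⟩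

/-- Concatenation `x_{i:j}` of the column selections from column `i` to column `j`. -/
def seg {D : Type*} [DecidableEq D] (x : ℕ → Finset D) (i j : ℕ) : Finset D :=
  (Finset.Icc i j).biUnion x

/-- The set of the `r` locations of column `i`. -/
def column {D : Type*} [Fintype D] (col : D → ℕ) (i : ℕ) : Finset D :=
  Finset.univ.filter (fun p => col p = i)

/-- The complementary vector `u_i` of unobserved locations of column `i` for a path `x`. -/
def ucomp {D : Type*} [Fintype D] [DecidableEq D] (col : D → ℕ) (x : ℕ → Finset D) :
    ℕ → Finset D :=
  fun i => column col i \ x i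

/-- A path selects, in every column `i = 1,…,n`, a vector of `k` distinct locations of
column `i`. -/
def IsPath {D : Type*} [Fintype D] (col : D → ℕ) (n k : ℕ) (x : ℕ → Finset D) : Prop :=
  ∀ i, 1 ≤ i → i ≤ n → x i ⊆ column col i ∧ (x i).card = k

open Matrix in
/-- **Lemma (posterior variance is bounded below by the noise variance).** -/
theorem posterior_variance_ge_noise
    {D : Type*} [Fintype D] [DecidableEq D]
    (K : D → D → ℝ) (σn2 : ℝ)
    (hn : 0 < σn2)
    (hKsymm : ∀ p q : D, K p q = K q p)
    (hKpsd : (Matrix.of K).PosSemidef)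
    (y : D) (A : Finset D) (hyA : y ∉ A) :
    σn2 ≤ postVar (SigmaMat K σn2) y A := by
  classical
  set Sg := SigmaMat K σn2 with hSg
  -- block matrices over K
  set A11 : Matrix ↥({y} : Finset D) ↥({y} : Finset D) ℝ := subMat (Matrix.of K) {y} {y}
  set B : Matrix ↥({y} : Finset D) ↥A ℝ := subMat (Matrix.of K) {y} A
  set Dm : Matrix ↥A ↥A ℝ := subMat Sg A A
  have hBH : Bᴴ = subMat (Matrix.of K) A {y} := by
    ext p q
    simp [B, subMat, Matrix.conjTranspose_apply, hKsymm p.1 q.1]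
  -- Dm is positive definite
  have hDm : Dm.PosDef := by
    have heq : Dm = subMat (Matrix.of K) A A + σn2 • (1 : Matrix ↥A ↥A ℝ) := by
      ext p q
      by_cases h : p = q
      · subst h; simp [Dm, subMat, SigmaMat, Sg]
      · have : (p : D) ≠ q := fun hc => h (Subtype.ext hc)
        simp [Dm, subMat, SigmaMat, Sg, this, Matrix.one_apply_ne h, h]
    rw [heq]
    refine Matrix.PosDef.posSemidef_add (hKpsd.submatrix _) ?_
    have h1 : (Matrix.diagonal (fun _ : ↥A => σn2)).PosDef :=
      Matrix.PosDef.diagonal (fun _ => hn)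
    have h2 : σn2 • (1 : Matrix ↥A ↥A ℝ) = Matrix.diagonal (fun _ : ↥A => σn2) := by
      ext p q
      by_cases h : p = q <;> simp [Matrix.one_apply, Matrix.diagonal, h]
    rw [h2]; exact h1
  haveI : Invertible Dm := hDm.isUnit.invertible
  -- the block matrix is PSD
  have hM : (Matrix.fromBlocks A11 B Bᴴ Dm).PosSemidef := by
    have heq : Matrix.fromBlocks A11 B Bᴴ Dm =
        (Matrix.of K).submatrix (Sum.elim (fun p : ↥({y} : Finset D) => (p : D))
          (fun q : ↥A => (q : D)))
          (Sum.elim (fun p : ↥({y} : Finset D) => (p : D)) (fun q : ↥A => (q : D)))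
        + Matrix.diagonal (Sum.elim (fun _ : ↥({y} : Finset D) => (0:ℝ)) (fun _ : ↥A => σn2)) := by
      ext i j
      rcases i with p | p <;> rcases j with q | q
      · simp [A11, subMat, Matrix.diagonal, Matrix.fromBlocks]
      · simp [B, subMat, Matrix.diagonal, Matrix.fromBlocks]
      · rw [hBH]; simp [subMat, Matrix.diagonal, Matrix.fromBlocks]
      · by_cases h : p = q
        · subst h; simp [Dm, subMat, SigmaMat, Sg, Matrix.fromBlocks]
        · have h2 : (p : D) ≠ q := fun hc => h (Subtype.ext hc)
          simp [Dm, subMat, SigmaMat, Sg, Matrix.fromBlocks, Matrix.diagonal, h, h2]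
    rw [heq]
    refine (hKpsd.submatrix _).add ?_
    refine Matrix.posSemidef_diagonal_iff.mpr ?_
    rintro (i | i) <;> simp [hn.le]
  -- Schur complement is PSD
  have hSchur : (A11 - B * Dm⁻¹ * Bᴴ).PosSemidef :=
    (Matrix.PosDef.fromBlocks₂₂ A11 B hDm).mp hM
  -- extract the (y,y) entry
  set y' : ↥({y} : Finset D) := ⟨y, Finset.mem_singleton_self y⟩
  have hentry : 0 ≤ (A11 - B * Dm⁻¹ * Bᴴ) y' y' := by
    have h := hSchur.dotProduct_mulVec_nonneg (Pi.single y' 1)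
    have hy : ∀ z : ↥({y} : Finset D), z = y' := fun z => Subtype.ext (Finset.mem_singleton.mp z.2)
    simpa [dotProduct, Matrix.mulVec, Pi.single_apply, hy] using h
  -- relate to postVar
  have hsub1 : subMat Sg {y} A = B := by
    ext p q
    have : (p : D) ≠ (q : D) := by
      have hp : (p : D) = y := Finset.mem_singleton.mp p.2
      rw [hp]; exact fun hc => hyA (hc ▸ q.2)
    simp [subMat, SigmaMat, Sg, B, this]
  have hsub2 : subMat Sg A {y} = Bᴴ := by
    rw [hBH]
    ext p q
    have : (p : D) ≠ (q : D) := by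
      have hq : (q : D) = y := Finset.mem_singleton.mp q.2
      rw [hq]; exact fun hc => hyA (hc ▸ p.2)
    simp [subMat, SigmaMat, Sg, this]
  have hsub0 : subMat Sg {y} {y} y' y' = A11 y' y' + σn2 := by
    simp [subMat, SigmaMat, Sg, A11]
  have : postVar Sg y A = A11 y' y' + σn2 - (B * Dm⁻¹ * Bᴴ) y' y' := by
    simp only [postVar, postCov, hsub1, hsub2, Matrix.sub_apply, hsub0]
    rw [← hsub0]
  rw [hSg] at this ⊢
  rw [this]
  have := hentry
  simp only [Matrix.sub_apply] at this
  linarith
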